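/- Let G be a connected simple graph on n ≥ 2 vertices with largest distance eigenvalue λ_1(D). Then DEE(G) ≥ e^{λ_1(D)} + (n-1)·e^{-λ_1(D)/(n-1)}, with equality if and only if λ_2(D) = λ_3(D) = ... = λ_n(D). -/

import Mathlib

namespace DistanceEstrada

variable {n : ℕ}

/-- The distance matrix of a simple graph on `Fin n`. -/
noncomputable def distMatrix (G : SimpleGraph (Fin n)) : Matrix (Fin n) (Fin n) ℝ :=
  fun i j => (G.dist i j : ℝ)

lemma distMatrix_isHermitian (G : SimpleGraph (Fin n)) : (distMatrix G).IsHermitian := by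
  unfold Matrix.IsHermitian
  ext i j
  simp [distMatrix, Matrix.conjTranspose_apply, SimpleGraph.dist_comm]

/-- The distance eigenvalues of `G` (in no particular order). -/
noncomputable def distEig (G : SimpleGraph (Fin n)) : Fin n → ℝ :=
  (distMatrix_isHermitian G).eigenvalues

/-- The distance Estrada index. -/
noncomputable def DEE (G : SimpleGraph (Fin n)) : ℝ :=
  ∑ i, Real.exp (distEig G i)

open Classical in
/-- The adjacency matrix of `G` over `ℝ`. -/
noncomputable def adjMat (G : SimpleGraph (Fin n)) : Matrix (Fin n) (Fin n) ℝ :=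
  fun i j => if G.Adj i j then 1 else 0

lemma adjMat_isHermitian (G : SimpleGraph (Fin n)) : (adjMat G).IsHermitian := by
  unfold Matrix.IsHermitian
  ext i j
  simp only [adjMat, Matrix.conjTranspose_apply, star_trivial]
  rw [SimpleGraph.adj_comm]

/-- The adjacency eigenvalues of `G` (in no particular order). -/
noncomputable def adjEig (G : SimpleGraph (Fin n)) : Fin n → ℝ :=
  (adjMat_isHermitian G).eigenvalues

/-- The Estrada index. -/
noncomputable def EE (G : SimpleGraph (Fin n)) : ℝ :=
  ∑ i, Real.exp (adjEig G i)


lemma sum_distEig_eq_zero (G : SimpleGraph (Fin n)) : ∑ i, distEig G i = 0 := by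
  have hH := distMatrix_isHermitian G
  have htr : (distMatrix G).trace = 0 := by
    simp [Matrix.trace, Matrix.diag, distMatrix, SimpleGraph.dist_self]
  have hspec := hH.spectral_theorem
  have h2 : (distMatrix G).trace =
      (Matrix.diagonal ((RCLike.ofReal : ℝ → ℝ) ∘ hH.eigenvalues)).trace := by
    conv_lhs => rw [hspec]
    rw [Unitary.conjStarAlgAut_apply, Matrix.trace_mul_cycle]
    have hu := Matrix.mem_unitaryGroup_iff'.mp (hH.eigenvectorUnitary).2
    rw [hu, Matrix.one_mul]
  have h3 : (Matrix.diagonal ((RCLike.ofReal : ℝ → ℝ) ∘ hH.eigenvalues)).trace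
      = ∑ i, distEig G i := by
    simp [Matrix.trace_diagonal, distEig]
  rw [← h3, ← h2, htr]

/-- Inner inequality in the proof of Theorem 3: for a connected graph `G` on `n ≥ 2` vertices
with largest distance eigenvalue `λ₁(D)`, `DEE(G) ≥ e^{λ₁(D)} + (n-1) e^{-λ₁(D)/(n-1)}`,
with equality iff `λ₂(D) = λ₃(D) = ⋯ = λₙ(D)`. -/
theorem distance_estrada_lower_bound_spectral_radius {n : ℕ} (hn : 2 ≤ n)
    (G : SimpleGraph (Fin n)) (hconn : G.Connected)
    (lam1 : ℝ) (hlam1 : IsGreatest (Set.range (distEig G)) lam1) :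
    Real.exp lam1 + ((n : ℝ) - 1) * Real.exp (-lam1 / ((n : ℝ) - 1)) ≤ DEE G ∧
    (Real.exp lam1 + ((n : ℝ) - 1) * Real.exp (-lam1 / ((n : ℝ) - 1)) = DEE G ↔
      ∃ i : Fin n, distEig G i = lam1 ∧
        ∀ j k : Fin n, j ≠ i → k ≠ i → distEig G j = distEig G k) := by
  obtain ⟨⟨i0, hi0⟩, hub⟩ := hlam1
  set f := distEig G with hf
  have hc : (0:ℝ) < (n:ℝ) - 1 := by
    have : (2:ℝ) ≤ (n:ℝ) := by exact_mod_cast hn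
    linarith
  set c : ℝ := (n:ℝ) - 1 with hcdef
  set m : ℝ := -lam1 / c with hmdef
  have hcm : c * m = -lam1 := by
    rw [hmdef]; field_simp
  set S : Finset (Fin n) := Finset.univ.erase i0 with hSdef
  have hcardS : (S.card : ℝ) = c := by
    rw [hSdef, Finset.card_erase_of_mem (Finset.mem_univ _)]
    simp only [Finset.card_univ, Fintype.card_fin, hcdef]
    have h1 : 1 ≤ n := le_trans (by norm_num) hn
    push_cast [Nat.cast_sub h1]
    ring
  have hsum0 : ∑ i, f i = 0 := sum_distEig_eq_zero G
  have hSsum : ∑ j ∈ S, f j = -lam1 := by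
    have := Finset.add_sum_erase Finset.univ f (Finset.mem_univ i0)
    rw [hsum0, hi0] at this
    linarith
  -- pointwise bound
  have hpt : ∀ j ∈ S, Real.exp m * (f j - m + 1) ≤ Real.exp (f j) := by
    intro j _
    have h1 : (f j - m) + 1 ≤ Real.exp (f j - m) := Real.add_one_le_exp _
    calc Real.exp m * (f j - m + 1) ≤ Real.exp m * Real.exp (f j - m) := by
          have := Real.exp_pos m; nlinarith
      _ = Real.exp (f j) := by rw [← Real.exp_add]; ring_nf
  have hpt_iff : ∀ j ∈ S, (Real.exp m * (f j - m + 1) = Real.exp (f j) ↔ f j = m) := by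
    intro j _
    constructor
    · intro h
      by_contra hne
      have hne' : f j - m ≠ 0 := fun h0 => hne (by linarith [sub_eq_zero.mp h0])
      have h1 : (f j - m) + 1 < Real.exp (f j - m) := Real.add_one_lt_exp hne'
      have h2 : Real.exp m * (f j - m + 1) < Real.exp m * Real.exp (f j - m) := by
        have := Real.exp_pos m; nlinarith
      rw [← Real.exp_add] at h2
      have : m + (f j - m) = f j := by ring
      rw [this] at h2
      linarith [h.ge, h2]
    · intro h; rw [h]; simp
  have hsumLHS : ∑ j ∈ S, Real.exp m * (f j - m + 1) = c * Real.exp m := by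
    rw [← Finset.mul_sum]
    have : ∑ j ∈ S, (f j - m + 1) = c := by
      rw [Finset.sum_add_distrib, Finset.sum_sub_distrib, hSsum]
      simp only [Finset.sum_const, nsmul_eq_mul, mul_one]
      rw [hcardS]
      linarith [hcm]
    rw [this]; ring
  have hDEE : DEE G = Real.exp lam1 + ∑ j ∈ S, Real.exp (f j) := by
    unfold DEE
    rw [← Finset.add_sum_erase Finset.univ (fun j => Real.exp (f j)) (Finset.mem_univ i0), hi0]
  have hineq : Real.exp lam1 + c * Real.exp m ≤ DEE G := by
    rw [hDEE, ← hsumLHS]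
    have := Finset.sum_le_sum hpt
    linarith
  have hmain_iff : Real.exp lam1 + c * Real.exp m = DEE G ↔ ∀ j ∈ S, f j = m := by
    rw [hDEE, ← hsumLHS]
    constructor
    · intro h
      have hs : ∑ j ∈ S, Real.exp m * (f j - m + 1) = ∑ j ∈ S, Real.exp (f j) := by linarith
      intro j hj
      exact (hpt_iff j hj).mp ((Finset.sum_eq_sum_iff_of_le hpt).mp hs j hj)
    · intro h
      have : ∑ j ∈ S, Real.exp m * (f j - m + 1) = ∑ j ∈ S, Real.exp (f j) :=
        Finset.sum_congr rfl (fun j hj => (hpt_iff j hj).mpr (h j hj))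
      linarith
  have hmemS : ∀ j : Fin n, j ≠ i0 → j ∈ S := fun j hj =>
    Finset.mem_erase.mpr ⟨hj, Finset.mem_univ j⟩
  rw [hmdef] at hineq hmain_iff ⊢
  refine ⟨hineq, hmain_iff.trans ?_⟩
  constructor
  · intro h
    refine ⟨i0, hi0, fun j k hj hk => ?_⟩
    rw [h j (hmemS j hj), h k (hmemS k hk)]
  · rintro ⟨i, hi, hall⟩
    by_cases hii : i = i0
    · subst hii
      -- all f j for j ∈ S are equal to some common value; it must be m
      intro j hj
      have hjne : j ≠ i := (Finset.mem_erase.mp hj).1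
      have hconst : ∀ k ∈ S, f k = f j := fun k hk =>
        hall k j (Finset.mem_erase.mp hk).1 hjne
      have : ∑ k ∈ S, f k = (S.card : ℝ) * f j := by
        rw [Finset.sum_congr rfl hconst]
        simp [mul_comm]
      rw [hSsum, hcardS] at this
      have : f j = -lam1 / c := by
        field_simp at this ⊢
        linarith
      exact this
    · -- i ≠ i0 : then every j ≠ i has f j = f i0 = lam1, and f i = lam1 too,
      -- so all eigenvalues equal lam1; sum = 0 forces lam1 = 0.
      have hallam : ∀ j : Fin n, f j = lam1 := by
        intro j
        by_cases hji : j = i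
        · rw [hji, hi]
        · rw [hall j i0 hji (fun h => hii h.symm)]
          · exact hi0
      have : ∑ j : Fin n, f j = (n : ℝ) * lam1 := by
        rw [Finset.sum_congr rfl (fun j _ => hallam j)]
        simp [mul_comm]
      rw [hsum0] at this
      have hlam0 : lam1 = 0 := by
        have hn0 : (0:ℝ) < (n:ℝ) := by
          have : (2:ℝ) ≤ (n:ℝ) := by exact_mod_cast hn
          linarith
        rcases mul_eq_zero.mp this.symm with h | h
        · exact absurd h (ne_of_gt hn0)
        · exact h
      intro j _
      rw [hallam j, hlam0]
      simp

end DistanceEstrada
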